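/- The function H(x,y,z) = (x/y)·e^{y(y+1)/x} is a first integral of the vector field Y = x(x − 2y² − y) ∂/∂x + y(x − y² − y) ∂/∂y − z(x − y² − y) ∂/∂z on the open set {x ≠ 0, y ≠ 0}; that is, the derivative of H along Y vanishes at every point with x ≠ 0 and y ≠ 0. -/

import Mathlib

/-- H(x,y,z) = (x/y)·e^{y(y+1)/x} is a first integral of
Y = x(x−2y²−y) ∂/∂x + y(x−y²−y) ∂/∂y − z(x−y²−y) ∂/∂z on {x ≠ 0, y ≠ 0}. -/
theorem stmt_3 :
    ∀ x y z : ℂ, x ≠ 0 → y ≠ 0 →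
      fderiv ℂ (fun p : ℂ × ℂ × ℂ => (p.1 / p.2.1) * Complex.exp ((p.2.1 ^ 2 + p.2.1) / p.1))
        (x, y, z)
        (x * (x - 2 * y ^ 2 - y), y * (x - y ^ 2 - y), -(z * (x - y ^ 2 - y))) = 0 := by
  intro x y z hx hy
  set vx : ℂ := x * (x - 2 * y ^ 2 - y) with hvx
  set vy : ℂ := y * (x - y ^ 2 - y) with hvy
  set vz : ℂ := -(z * (x - y ^ 2 - y)) with hvz
  -- differentiability of H at the point
  have d1 : DifferentiableAt ℂ (fun p : ℂ × ℂ × ℂ => p.1) (x, y, z) := differentiableAt_fst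
  have d2 : DifferentiableAt ℂ (fun p : ℂ × ℂ × ℂ => p.2.1) (x, y, z) :=
    differentiableAt_snd.fst
  have hdiff : DifferentiableAt ℂ
      (fun p : ℂ × ℂ × ℂ => (p.1 / p.2.1) * Complex.exp ((p.2.1 ^ 2 + p.2.1) / p.1))
      (x, y, z) := by
    have heq : (fun p : ℂ × ℂ × ℂ => (p.1 / p.2.1) * Complex.exp ((p.2.1 ^ 2 + p.2.1) / p.1))
        = fun p : ℂ × ℂ × ℂ =>
            (p.1 * (p.2.1)⁻¹) * Complex.exp ((p.2.1 ^ 2 + p.2.1) * (p.1)⁻¹) := by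
      funext p; rw [div_eq_mul_inv, div_eq_mul_inv]
    rw [heq]
    exact (d1.mul (d2.inv hy)).mul (((d2.pow 2).add d2).mul (d1.inv hx)).cexp
  -- the line through the point in direction v
  have ha : HasDerivAt (fun t : ℂ => x + t * vx) vx 0 := by
    simpa using ((hasDerivAt_id (0 : ℂ)).mul_const vx).const_add x
  have hb : HasDerivAt (fun t : ℂ => y + t * vy) vy 0 := by
    simpa using ((hasDerivAt_id (0 : ℂ)).mul_const vy).const_add y
  have hc : HasDerivAt (fun t : ℂ => z + t * vz) vz 0 := by
    simpa using ((hasDerivAt_id (0 : ℂ)).mul_const vz).const_add z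
  have hγ : HasDerivAt (fun t : ℂ => ((x + t * vx, y + t * vy, z + t * vz) : ℂ × ℂ × ℂ))
      (vx, vy, vz) 0 := ha.prodMk (hb.prodMk hc)
  -- derivative of H along the line, via the chain rule
  have hcomp := hdiff.hasFDerivAt.comp_hasDerivAt_of_eq 0 hγ (by simp)
  -- derivative of H along the line, computed directly in one variable
  have hb0 : y + 0 * vy ≠ 0 := by simpa using hy
  have ha0 : x + 0 * vx ≠ 0 := by simpa using hx
  have hq := ha.div hb hb0
  have he := ((((hb.pow 2).add hb).div ha ha0).cexp)
  have hD := hq.mul he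
  have key := hD.unique hcomp
  rw [← key]
  simp only [Pi.div_apply, Pi.add_apply, Pi.pow_apply, Pi.mul_apply]
  simp only [hvx, hvy, hvz]
  field_simp
  ring
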